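/- If ν is an (i,j)-transform of a partition μ, then μ and ν have the same staircase rank. -/
import Mathlib


/-- `μ : ℕ → ℕ` represents a partition via its parts `μ 1 ≥ μ 2 ≥ ⋯`; the index `0` is
unused and required to be `0`.  The parts are weakly decreasing and only finitely many
are nonzero. -/
def IsPartition (μ : ℕ → ℕ) : Prop :=
  μ 0 = 0 ∧ (∀ i, 1 ≤ i → μ (i + 1) ≤ μ i) ∧ {i | μ i ≠ 0}.Finite

/-- The weight `|μ|` of a partition: the sum of its parts. -/
noncomputable def pweight (μ : ℕ → ℕ) : ℕ := ∑ᶠ i, μ i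

/-- The length `ℓ(μ)`: the number of nonzero parts. -/
noncomputable def plength (μ : ℕ → ℕ) : ℕ := Set.ncard {i | 1 ≤ i ∧ μ i ≠ 0}

/-- A partition is strict if its nonzero parts are pairwise distinct. -/
def IsStrict (μ : ℕ → ℕ) : Prop := ∀ i j, 1 ≤ i → i < j → μ j ≠ 0 → μ j < μ i

/-- `(i, j)` is a cell of the Ferrers board of `μ`. -/
def Cell (μ : ℕ → ℕ) (i j : ℕ) : Prop := 1 ≤ i ∧ 1 ≤ j ∧ j ≤ μ i

/-- The Ferrers board of `μ` as a set of cells. -/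
def Board (μ : ℕ → ℕ) : Set (ℕ × ℕ) := {p | Cell μ p.1 p.2}

/-- The number of ways to place `k` non-attacking rooks on the Ferrers board of `μ`,
i.e. the number of `k`-element subsets of the board whose cells have pairwise distinct
row indices and pairwise distinct column indices. -/
noncomputable def rookCount (μ : ℕ → ℕ) (k : ℕ) : ℕ :=
  Set.ncard {s : Finset (ℕ × ℕ) | s.card = k ∧ (∀ p ∈ s, Cell μ p.1 p.2) ∧
    ∀ p ∈ s, ∀ q ∈ s, p ≠ q → p.1 ≠ q.1 ∧ p.2 ≠ q.2}

/-- Rook equivalence of partitions. -/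
def RookEquiv (μ ν : ℕ → ℕ) : Prop := ∀ k, rookCount μ k = rookCount ν k

/-- `α` contains `μ` as a pattern: there are strictly increasing functions `f, g` on the
positive integers such that `(i, j)` is a cell of `μ` iff `(f i, g j)` is a cell of `α`. -/
def Contains (α μ : ℕ → ℕ) : Prop :=
  ∃ f g : ℕ → ℕ,
    (∀ i, 1 ≤ i → 1 ≤ f i) ∧ (∀ j, 1 ≤ j → 1 ≤ g j) ∧
    (∀ i j, 1 ≤ i → i < j → f i < f j) ∧
    (∀ i j, 1 ≤ i → i < j → g i < g j) ∧
    (∀ i j, 1 ≤ i → 1 ≤ j → (Cell μ i j ↔ Cell α (f i) (g j)))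

/-- `P_n(μ)`: the set of partitions of `n` containing `μ`. -/
def PnSet (n : ℕ) (μ : ℕ → ℕ) : Set (ℕ → ℕ) :=
  {α | IsPartition α ∧ pweight α = n ∧ Contains α μ}

/-- `P_n(μ, k)`: the members of `P_n(μ)` whose first part is `k + μ 1`. -/
def PnSetK (n : ℕ) (μ : ℕ → ℕ) (k : ℕ) : Set (ℕ → ℕ) :=
  {α | α ∈ PnSet n μ ∧ α 1 = k + μ 1}

/-- Wilf equivalence of partitions. -/
def WilfEquiv (μ ν : ℕ → ℕ) : Prop :=
  ∀ n, 1 ≤ n → (PnSet n μ).ncard = (PnSet n ν).ncard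

/-- The multiplicity of `v` among the parts `μ 1, μ 2, …` of `μ`. -/
noncomputable def partCount (μ : ℕ → ℕ) (v : ℕ) : ℕ := Set.ncard {i | 1 ≤ i ∧ μ i = v}

/-- `γ` is the extension of `ν` by the pair `(α, β)`: `γ` is a partition whose multiset of
nonzero parts is the multiset union of the nonzero parts of `ν + α` and those of `β`. -/
def IsExtension (ν α β γ : ℕ → ℕ) : Prop :=
  IsPartition γ ∧
  ∀ v, 1 ≤ v → partCount γ v = partCount (fun i => ν i + α i) v + partCount β v

/-- `ν` is the `(i, j)`-transform of `μ`: the board of `ν` is obtained from the board of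
`μ` by replacing the subboard of cells weakly southeast of `(i, j)` by its conjugate. -/
def IsTransform (i j : ℕ) (μ ν : ℕ → ℕ) : Prop :=
  IsPartition μ ∧ IsPartition ν ∧ 1 ≤ i ∧ 1 ≤ j ∧
  Board ν = (Board μ \ {p ∈ Board μ | i ≤ p.1 ∧ j ≤ p.2}) ∪
    (fun p : ℕ × ℕ => (i + (p.2 - j), j + (p.1 - i))) '' {p ∈ Board μ | i ≤ p.1 ∧ j ≤ p.2}

/-- One step: `ν` is an `(i, 1)`-transform of `μ` for some `i`. -/
def TransformRel1 (μ ν : ℕ → ℕ) : Prop := ∃ i, IsTransform i 1 μ ν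

/-- `(i, 1)`-equivalence: a finite (possibly empty) sequence of `(i, 1)`-transformations. -/
def TransformEquiv1 : (ℕ → ℕ) → (ℕ → ℕ) → Prop := Relation.ReflTransGen TransformRel1

/-- One step: `ν` is an `(i, j)`-transform of `μ` for some `i, j`. -/
def TransformRel (μ ν : ℕ → ℕ) : Prop := ∃ i j, IsTransform i j μ ν

/-- Differing by a finite sequence of `(i, j)`-transformations. -/
def TransformEquiv : (ℕ → ℕ) → (ℕ → ℕ) → Prop := Relation.ReflTransGen TransformRel

/-- Row `i` of `μ` is salient if `i + μ i ≥ j + μ j` for some `j > i`. -/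
def Salient (μ : ℕ → ℕ) (i : ℕ) : Prop := ∃ j, i < j ∧ j + μ j ≤ i + μ i

/-- The multiplicity of `v` in the multiset `S_μ = {i + μ i : row i of μ is salient}`. -/
noncomputable def salientCount (μ : ℕ → ℕ) (v : ℕ) : ℕ :=
  Set.ncard {i | 1 ≤ i ∧ Salient μ i ∧ i + μ i = v}

/-- The staircase rank of `μ`: the largest `k` with `μ i ≥ k - i + 1` for `1 ≤ i ≤ k`. -/
noncomputable def staircaseRank (μ : ℕ → ℕ) : ℕ :=
  sSup {k | ∀ i, 1 ≤ i → i ≤ k → k + 1 ≤ μ i + i}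

/-- The number of cells of the L in `μ` with corner `p = (i, j)`: the cells `(i, x)` of `μ`
with `x ≥ j` together with the cells `(y, j)` with `1 ≤ y ≤ i`. -/
def LWeight (μ : ℕ → ℕ) (p : ℕ × ℕ) : ℕ := (μ p.1 - p.2) + p.1

/-- `c` lists the corners of a nested sequence of `k` L's in `μ`: each corner is a cell of
`μ`, and later corners are strictly above and strictly to the right of earlier ones. -/
def IsNested (μ : ℕ → ℕ) {k : ℕ} (c : Fin k → ℕ × ℕ) : Prop :=
  (∀ a, Cell μ (c a).1 (c a).2) ∧
  ∀ a b : Fin k, a < b → (c b).1 < (c a).1 ∧ (c a).2 < (c b).2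

/-- `w_k(μ)`: the maximum weight of a sequence of `k` nested L's in `μ`
(`0` if there is no such sequence). -/
noncomputable def nestedLMax (μ : ℕ → ℕ) (k : ℕ) : ℕ :=
  sSup {w | ∃ c : Fin k → ℕ × ℕ, IsNested μ c ∧ ∑ a, LWeight μ (c a) = w}

lemma staircase_key (i j : ℕ) (μ ν : ℕ → ℕ) (h : IsTransform i j μ ν) (k : ℕ)
    (hk : ∀ x, 1 ≤ x → x ≤ k → k + 1 ≤ μ x + x) :
    ∀ x, 1 ≤ x → x ≤ k → k + 1 ≤ ν x + x := by
  obtain ⟨hμ, hν, hi, hj, hb⟩ := h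
  intro x hx hxk
  set y := k + 1 - x with hy
  have hy1 : 1 ≤ y := by omega
  suffices hcell : (x, y) ∈ Board ν by
    have := hcell.2.2
    simp only [Cell] at this
    omega
  rw [hb]
  by_cases hc : i ≤ x ∧ j ≤ y
  · right
    refine ⟨(i + (y - j), j + (x - i)), ⟨⟨by omega, by omega, ?_⟩, by omega, by omega⟩, ?_⟩
    · have ha1 : 1 ≤ i + (y - j) := by omega
      have ha2 : i + (y - j) ≤ k := by omega
      have := hk _ ha1 ha2
      show j + (x - i) ≤ μ (i + (y - j))
      omega
    · show (i + (j + (x - i) - j), j + (i + (y - j) - i)) = (x, y)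
      simp only [Prod.mk.injEq]
      omega
  · left
    have hcellμ : (x, y) ∈ Board μ := by
      have := hk x hx hxk
      exact show Cell μ x y from ⟨hx, hy1, by omega⟩
    exact ⟨hcellμ, fun hmem => hc hmem.2⟩

lemma staircase_key' (i j : ℕ) (μ ν : ℕ → ℕ) (h : IsTransform i j μ ν) (k : ℕ)
    (hk : ∀ x, 1 ≤ x → x ≤ k → k + 1 ≤ ν x + x) :
    ∀ x, 1 ≤ x → x ≤ k → k + 1 ≤ μ x + x := by
  obtain ⟨hμ, hν, hi, hj, hb⟩ := h
  intro x hx hxk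
  set y := k + 1 - x with hy
  have hy1 : 1 ≤ y := by omega
  by_cases hc : i ≤ x ∧ j ≤ y
  · have ha1 : 1 ≤ i + (y - j) := by omega
    have ha2 : i + (y - j) ≤ k := by omega
    have hab : (i + (y - j), j + (x - i)) ∈ Board ν := by
      have := hk _ ha1 ha2
      exact show Cell ν _ _ from ⟨by omega, by omega, show j + (x - i) ≤ ν (i + (y - j)) by omega⟩
    rw [hb] at hab
    rcases hab with ⟨hμab, hnot⟩ | ⟨p, ⟨hpμ, hpi, hpj⟩, heq⟩
    · exact absurd ⟨hμab, by omega, by omega⟩ hnot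
    · have h1 : i + (p.2 - j) = i + (y - j) := congrArg Prod.fst heq
      have h2 : j + (p.1 - i) = j + (x - i) := congrArg Prod.snd heq
      have hp1 : p.1 = x := by omega
      have hp2 : p.2 = y := by omega
      have := hpμ.2.2
      rw [hp1, hp2] at this
      omega
  · have hcν : (x, y) ∈ Board ν := by
      have := hk x hx hxk
      exact show Cell ν x y from ⟨hx, hy1, by omega⟩
    rw [hb] at hcν
    rcases hcν with ⟨hμxy, _⟩ | ⟨p, ⟨hpμ, hpi, hpj⟩, heq⟩
    · have : y ≤ μ x := hμxy.2.2
      omega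
    · have h1 : i + (p.2 - j) = x := congrArg Prod.fst heq
      have h2 : j + (p.1 - i) = y := congrArg Prod.snd heq
      exact absurd ⟨by omega, by omega⟩ hc

theorem staircase_rank_invariant (i j : ℕ) (μ ν : ℕ → ℕ)
    (h : IsTransform i j μ ν) :
    staircaseRank μ = staircaseRank ν := by
  unfold staircaseRank
  congr 1
  ext k
  exact ⟨fun hk => staircase_key i j μ ν h k hk, fun hk => staircase_key' i j μ ν h k hk⟩
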